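/- arXiv:1402.1612 — 2 statements merged into one kernel-verified Lean document; each statement's English description precedes it below -/
import Mathlib

section
/- Let E be a group and C ≥ 1 a natural number such that every finite subgroup G of E contains an abelian subgroup A with index [G : A] ≤ C. Then every finite nonabelian simple subgroup of E has order at most C! (the factorial of C). In particular, a Jordan group contains only finitely many finite nonabelian simple subgroups up to isomorphism. -/
/-- If every finite subgroup of `E` has an abelian subgroup of index at most `C ≥ 1`, then
every finite nonabelian simple subgroup of `E` has order at most `C!`. In particular, a
Jordan group contains only finitely many finite nonabelian simple subgroups up to
isomorphism. -/
theorem card_le_factorial_of_simple_nonabelian_of_jordan_bound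
    (E : Type*) [Group E] (C : ℕ) (hC : 1 ≤ C)
    (hJordan : ∀ G : Subgroup E, Finite G →
      ∃ A : Subgroup G, IsMulCommutative A ∧ A.index ≤ C)
    (G : Subgroup E) (hG : Finite G) (hsimple : IsSimpleGroup G)
    (hnonab : ¬ ∀ x y : G, x * y = y * x) :
    Nat.card G ≤ Nat.factorial C := by
  obtain ⟨A, hAcomm, hAidx⟩ := hJordan G hG
  have hker : A.normalCore = (MulAction.toPermHom G (G ⧸ A)).ker :=
    Subgroup.normalCore_eq_ker A
  rcases hsimple.eq_bot_or_eq_top_of_normal A.normalCore A.normalCore_normal with h | h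
  · -- core trivial: G embeds into Perm (G ⧸ A)
    have hinj : Function.Injective (MulAction.toPermHom G (G ⧸ A)) := by
      rw [← MonoidHom.ker_eq_bot_iff, ← hker, h]
    haveI : Finite (G ⧸ A) := Quotient.finite _
    have hcard : Nat.card G ≤ Nat.card (Equiv.Perm (G ⧸ A)) :=
      Nat.card_le_card_of_injective _ hinj
    have : Nat.card (Equiv.Perm (G ⧸ A)) = Nat.factorial (Nat.card (G ⧸ A)) := by
      haveI : Fintype (G ⧸ A) := Fintype.ofFinite _
      haveI : DecidableEq (G ⧸ A) := Classical.decEq _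
      rw [Nat.card_eq_fintype_card, Nat.card_eq_fintype_card, Fintype.card_perm]
    rw [this] at hcard
    have : Nat.card (G ⧸ A) = A.index := rfl
    rw [this] at hcard
    exact hcard.trans (Nat.factorial_le hAidx)
  · -- core = ⊤ : A = ⊤, so G abelian, contradiction
    have hA : A = ⊤ := top_unique (h ▸ A.normalCore_le)
    refine absurd (fun x y => ?_) hnonab
    have := hAcomm.is_comm.comm ⟨x, hA ▸ Subgroup.mem_top x⟩ ⟨y, hA ▸ Subgroup.mem_top y⟩
    exact Subtype.ext_iff.mp this
end

section
/- Let m ≥ 3, let D be the dihedral group of order 2^m (the dihedral group DihedralGroup (2^(m-1)) on a cyclic group of order 2^(m-1) ≥ 4), let Q be a finite abelian group of odd order, and let φ : Q → Aut(D) be a group homomorphism. Then the semidirect product G = D ⋊_φ Q contains an abelian subgroup of index at most 2. -/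
open DihedralGroup in
/-- Sign homomorphism of the dihedral group: rotations ↦ 0, reflections ↦ 1. -/
def dsgn (n : ℕ) : DihedralGroup n →* Multiplicative (ZMod 2) where
  toFun d := match d with
    | .r _ => 1
    | .sr _ => Multiplicative.ofAdd 1
  map_one' := rfl
  map_mul' := by
    rintro (i | i) (j | j) <;>
      simp only [r_mul_r, r_mul_sr, sr_mul_r, sr_mul_sr] <;> decide

open DihedralGroup in
lemma r_pow_general (n : ℕ) (a : ZMod n) (k : ℕ) :
    (r a : DihedralGroup n) ^ k = r ((k : ZMod n) * a) := by
  induction k with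
  | zero => simp
  | succ t ih =>
    rw [pow_succ, ih, r_mul_r]
    congr 1
    push_cast
    ring

open DihedralGroup in
lemma aux_fix_r (m : ℕ) (hm : 3 ≤ m) (σ : MulAut (DihedralGroup (2 ^ (m - 1))))
    (N : ℕ) (hN : Odd N) (hσ : σ ^ N = 1) :
    ∀ i, σ (r i) = r i := by
  have hn4 : 4 ≤ 2 ^ (m - 1) := by
    calc 4 = 2 ^ 2 := rfl
    _ ≤ 2 ^ (m - 1) := Nat.pow_le_pow_right (by norm_num) (by omega)
  haveI : NeZero (2 ^ (m - 1)) := ⟨by omega⟩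
  have horder : orderOf (σ (r 1)) = 2 ^ (m - 1) := by
    rw [MulEquiv.orderOf_eq, orderOf_r_one]
  obtain ⟨j, hj⟩ : ∃ j, σ (r 1) = r j := by
    cases h : σ (r 1) with
    | r j => exact ⟨j, rfl⟩
    | sr j => rw [h, orderOf_sr] at horder; omega
  have hσr : ∀ x : ZMod (2 ^ (m - 1)), σ (r x) = r (j * x) := by
    intro x
    have hx : (r x : DihedralGroup (2 ^ (m - 1))) = (r 1) ^ x.val := by
      rw [r_one_pow, ZMod.natCast_val, ZMod.cast_id]
    rw [hx, map_pow, hj, r_pow_general]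
    congr 1
    rw [ZMod.natCast_val, ZMod.cast_id, mul_comm]
  have hpow : ∀ (t : ℕ) (x : ZMod (2 ^ (m - 1))), (σ ^ t) (r x) = r (j ^ t * x) := by
    intro t
    induction t with
    | zero => intro x; simp
    | succ t ih =>
      intro x
      rw [pow_succ', MulAut.mul_apply, ih, hσr]
      congr 1
      ring
  have hjN : j ^ N = 1 := by
    have := hpow N 1
    rw [hσ] at this
    simp only [MulAut.one_apply, mul_one, r.injEq] at this
    exact this.symm
  obtain ⟨u, hu⟩ : IsUnit j := IsUnit.of_pow_eq_one hjN hN.pos.ne'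
  have huN : u ^ N = 1 := by
    ext
    push_cast [hu]
    exact hjN
  have hcard : Fintype.card (ZMod (2 ^ (m - 1)))ˣ = 2 ^ (m - 2) := by
    rw [ZMod.card_units_eq_totient, Nat.totient_prime_pow Nat.prime_two (by omega)]
    have h12 : m - 1 - 1 = m - 2 := by omega
    rw [h12]
    simp
  have hu2 : u ^ 2 ^ (m - 2) = 1 := by
    rw [← hcard]; exact pow_card_eq_one
  have hdvd1 : orderOf u ∣ N := orderOf_dvd_of_pow_eq_one huN
  have hdvd2 : orderOf u ∣ 2 ^ (m - 2) := orderOf_dvd_of_pow_eq_one hu2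
  have hcop : Nat.Coprime N (2 ^ (m - 2)) := by
    refine Nat.Coprime.pow_right _ ?_
    have hN1 : N % 2 = 1 := Nat.odd_iff.mp hN
    exact Nat.coprime_comm.mp ((Nat.prime_two.coprime_iff_not_dvd).mpr (by omega))
  have hord : orderOf u = 1 := Nat.eq_one_of_dvd_coprimes hcop hdvd1 hdvd2
  have hu1 : u = 1 := orderOf_eq_one_iff.mp hord
  have hj1 : j = 1 := by rw [← hu, hu1]; rfl
  intro i
  rw [hσr, hj1, one_mul]

/-- If D is the dihedral group of order 2^m with m ≥ 3 and Q is a finite abelian group of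
odd order acting on D via φ : Q → Aut(D), then the semidirect product D ⋊_φ Q contains an
abelian subgroup of index at most 2. -/
theorem dihedral_semidirect_odd_abelian_index_le_two
    (m : ℕ) (hm : 3 ≤ m)
    (Q : Type*) [CommGroup Q] [Finite Q] (hQ : Odd (Nat.card Q))
    (φ : Q →* MulAut (DihedralGroup (2 ^ (m - 1)))) :
    ∃ A : Subgroup ((DihedralGroup (2 ^ (m - 1))) ⋊[φ] Q),
      IsMulCommutative A ∧ A.index ≤ 2 := by
  have hfix : ∀ (q : Q) (i : ZMod (2 ^ (m - 1))), φ q (.r i) = .r i := by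
    intro q
    apply aux_fix_r m hm (φ q) (Nat.card Q) hQ
    rw [← map_pow, pow_card_eq_one', map_one]
  have hsgn : ∀ (q : Q) (d : DihedralGroup (2 ^ (m - 1))),
      dsgn _ (φ q d) = dsgn _ d := by
    intro q d
    cases d with
    | r i => rw [hfix]
    | sr i =>
      cases h : φ q (.sr i) with
      | r k =>
        exfalso
        have h2 : φ q (.sr i) = φ q (.r k) := by rw [h, hfix]
        have := (φ q).injective h2
        simp at this
      | sr k => rfl
  let F : (DihedralGroup (2 ^ (m - 1)) ⋊[φ] Q) →* Multiplicative (ZMod 2) :=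
  { toFun := fun x => dsgn _ x.left
    map_one' := by simp
    map_mul' := fun a b => by
      simp only [SemidirectProduct.mul_left, map_mul, hsgn] }
  have hmem : ∀ x : DihedralGroup (2 ^ (m - 1)) ⋊[φ] Q,
      x ∈ F.ker → ∃ i, x.left = .r i := by
    intro x hx
    have hx' : dsgn _ x.left = 1 := hx
    cases h : x.left with
    | r i => exact ⟨i, rfl⟩
    | sr i =>
      exfalso
      rw [h] at hx'
      have : dsgn (2 ^ (m - 1)) (DihedralGroup.sr i) = Multiplicative.ofAdd 1 := rfl
      rw [this] at hx'
      exact absurd hx' (by decide)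
  refine ⟨F.ker, ⟨⟨fun a b => ?_⟩⟩, ?_⟩
  · obtain ⟨i, hi⟩ := hmem a.1 a.2
    obtain ⟨k, hk⟩ := hmem b.1 b.2
    have key : a.1 * b.1 = b.1 * a.1 := by
      apply SemidirectProduct.ext
      · simp only [SemidirectProduct.mul_left, hi, hk, hfix, DihedralGroup.r_mul_r]
        rw [add_comm]
      · simp only [SemidirectProduct.mul_right]
        exact mul_comm _ _
    exact Subtype.ext key
  · rw [Subgroup.index_ker]
    have h1 : Nat.card F.range ≤ Nat.card (Multiplicative (ZMod 2)) :=
      Nat.card_le_card_of_injective Subtype.val Subtype.val_injective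
    have h2 : Nat.card (Multiplicative (ZMod 2)) = 2 := by
      simp [Nat.card_eq_fintype_card]
    omega
end
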